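/- Let f : ℝ → ℝ ∪ {+∞} be convex and lower semicontinuous with f(0) = 0, f(a) = +∞ for a < 0, and int(dom(f)) ≠ ∅. Define e(a) = a f(a) − 2 ∫₀ᵃ f(s) ds for a ∈ dom(f) and e(a) = +∞ otherwise. Then e is convex and lower semicontinuous with e(0) = 0 and e(a) = +∞ for a < 0, int(dom(e)) ≠ ∅, and e is non-decreasing on [0, ∞). -/

import Mathlib

open Filter Set Topology MeasureTheory

noncomputable section
open scoped Classical

/-- Convexity for extended-real-valued functions on `ℝ`. -/
def EConvex (f : ℝ → EReal) : Prop :=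
  ∀ x y t : ℝ, 0 ≤ t → t ≤ 1 →
    f (t * x + (1 - t) * y) ≤ (t : EReal) * f x + ((1 - t : ℝ) : EReal) * f y

/-- The `H^{-1}` energy density associated to `f`:
`e(a) = a·f(a) − 2∫₀ᵃ f(s) ds` for `a ∈ dom f`, `+∞` otherwise. -/
def eDen (f : ℝ → EReal) (a : ℝ) : EReal :=
  if f a = ⊤ then ⊤
  else ((a * (f a).toReal - 2 * ∫ s in (0 : ℝ)..a, (f s).toReal : ℝ) : EReal)


open intervalIntegral

lemma st5_bot (f : ℝ → EReal) (hconv : EConvex f) (hlsc : LowerSemicontinuous f)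
    (hf0 : f 0 = 0) (hneg : ∀ a : ℝ, a < 0 → f a = ⊤) : ∀ a, f a ≠ ⊥ := by
  intro a h
  rcases lt_trichotomy a 0 with ha | ha | ha
  · rw [hneg a ha] at h; exact absurd h (by simp)
  · rw [ha, hf0] at h; exact absurd h (by simp)
  · have key : ∀ t : ℝ, 0 < t → t ≤ 1 → f (t * a) = ⊥ := by
      intro t ht0 ht1
      have := hconv a 0 t ht0.le ht1
      rw [h, hf0, mul_zero, add_zero, mul_zero, add_zero] at this
      rw [EReal.coe_mul_bot_of_pos ht0] at this
      exact le_bot_iff.1 this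
    have h1 : ((-1 : ℝ) : EReal) < f 0 := by rw [hf0]; exact_mod_cast (by norm_num : (-1:ℝ) < 0)
    obtain ⟨δ, hδ, hball⟩ := Metric.eventually_nhds_iff.1 (hlsc 0 _ h1)
    set t := min 1 (δ / (2 * a)) with htdef
    have ht0 : 0 < t := lt_min one_pos (by positivity)
    have ht1 : t ≤ 1 := min_le_left _ _
    have hdist : dist (t * a) 0 < δ := by
      rw [Real.dist_eq, sub_zero, abs_of_pos (by positivity)]
      calc t * a ≤ (δ / (2 * a)) * a := by
            apply mul_le_mul_of_nonneg_right (min_le_right _ _) ha.le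
        _ = δ / 2 := by field_simp
        _ < δ := by linarith
    have : f (t * a) > ((-1:ℝ):EReal) := hball hdist
    rw [key t ht0 ht1] at this
    exact absurd this (by simp)

-- f s finite for s between points of the domain (with 0)
lemma st5_Icc (f : ℝ → EReal) (hconv : EConvex f) (hf0 : f 0 = 0)
    (hbot : ∀ a, f a ≠ ⊥) :
    ∀ a s : ℝ, f a ≠ ⊤ → 0 ≤ s → s ≤ a → f s ≠ ⊤ := by
  intro a s ha hs0 hsa
  rcases eq_or_lt_of_le (hs0.trans hsa) with h0a | h0a
  · have : s = 0 := le_antisymm (hsa.trans h0a.symm.le) hs0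
    rw [this, hf0]; simp
  · have ht0 : 0 ≤ s / a := div_nonneg hs0 h0a.le
    have ht1 : s / a ≤ 1 := (div_le_one h0a).2 hsa
    have := hconv a 0 (s / a) ht0 ht1
    rw [mul_zero, add_zero, hf0, mul_zero, add_zero, div_mul_cancel₀ _ h0a.ne'] at this
    have hfa := EReal.coe_toReal ha (hbot a)
    rw [← hfa, ← EReal.coe_mul] at this
    exact ne_top_of_le_ne_top (EReal.coe_ne_top _) this

-- chord inequality for g = toReal ∘ f
lemma st5_chord (f : ℝ → EReal) (hconv : EConvex f) (hbot : ∀ a, f a ≠ ⊥) :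
    ∀ u v s : ℝ, f u ≠ ⊤ → f v ≠ ⊤ → f s ≠ ⊤ → u ≤ s → s ≤ v →
      (v - u) * (f s).toReal ≤ (v - s) * (f u).toReal + (s - u) * (f v).toReal := by
  intro u v s hu hv hs hus hsv
  rcases eq_or_lt_of_le (hus.trans hsv) with huv | huv
  · have h1 : s = u := le_antisymm (hsv.trans huv.symm.le) hus
    have h2 : v = u := huv.symm
    rw [h1, h2]; ring_nf; exact le_refl _
  · set t := (v - s) / (v - u) with htdef
    have hvu : (0:ℝ) < v - u := by linarith
    have ht0 : 0 ≤ t := div_nonneg (by linarith) hvu.le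
    have ht1 : t ≤ 1 := (div_le_one hvu).2 (by linarith)
    have hne : v - u ≠ 0 := hvu.ne'
    have hc : t * u + (1 - t) * v = s := by rw [htdef]; field_simp; ring
    have := hconv u v t ht0 ht1
    rw [hc, ← EReal.coe_toReal hu (hbot u), ← EReal.coe_toReal hv (hbot v),
      ← EReal.coe_toReal hs (hbot s), ← EReal.coe_mul, ← EReal.coe_mul, ← EReal.coe_add,
      EReal.coe_le_coe_iff] at this
    have h2 : (v - u) * (f s).toReal ≤ (v - u) * (t * (f u).toReal + (1 - t) * (f v).toReal) :=
      by nlinarith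
    calc (v - u) * (f s).toReal ≤ (v - u) * (t * (f u).toReal + (1 - t) * (f v).toReal) := h2
      _ = (v - s) * (f u).toReal + (s - u) * (f v).toReal := by rw [htdef]; field_simp; ring

lemma st5_cont (f : ℝ → EReal) (hconv : EConvex f) (hlsc : LowerSemicontinuous f)
    (hf0 : f 0 = 0) (hbot : ∀ a, f a ≠ ⊥) :
    ∀ a, f a ≠ ⊤ → ContinuousOn (fun s => (f s).toReal) (Icc 0 a) := by
  intro a ha
  rcases lt_or_ge a 0 with hneg | h0a
  · rw [Icc_eq_empty (by exact fun h => absurd (le_trans le_rfl h) (not_le.2 hneg))]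
    exact continuousOn_empty _
  have claim : ∀ p q c : ℝ, 0 ≤ p → p ≤ q → f p ≠ ⊤ → f q ≠ ⊤ → (c = p ∨ c = q) →
      Tendsto (fun s => (f s).toReal) (𝓝[Icc p q] c) (𝓝 (f c).toReal) := by
    intro p q c h0p hpq hp hq hc
    rcases eq_or_lt_of_le hpq with heq | hpq'
    · have hcp : c = p := by rcases hc with h | h; exact h; rw [h, heq]
      subst hcp; subst heq
      rw [Icc_self, nhdsWithin_singleton]
      exact tendsto_pure_nhds _ _
    have hfc : f c ≠ ⊤ := by
      rcases hc with h | h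
      · rw [h]; exact hp
      · rw [h]; exact hq
    have hmem : ∀ x ∈ Icc p q, f x ≠ ⊤ :=
      fun x hx => st5_Icc f hconv hf0 hbot q x hq (h0p.trans hx.1) hx.2
    refine tendsto_order.2 ⟨?_, ?_⟩
    · intro b hb
      have hb' : (b : EReal) < f c := by
        rw [← EReal.coe_toReal hfc (hbot c)]
        exact_mod_cast hb
      filter_upwards [mem_nhdsWithin_of_mem_nhds (hlsc c _ hb'), self_mem_nhdsWithin]
        with x hx1 hx2
      rw [← EReal.coe_toReal (hmem x hx2) (hbot x)] at hx1
      exact_mod_cast hx1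
    · intro b hb
      set u : ℝ → ℝ := fun x => ((q - x) * (f p).toReal + (x - p) * (f q).toReal) / (q - p)
        with hu
      have hucont : Continuous u := by
        apply Continuous.div_const
        exact ((continuous_const.sub continuous_id).mul continuous_const).add
          ((continuous_id.sub continuous_const).mul continuous_const)
      have huc : u c = (f c).toReal := by
        rcases hc with h | h <;> subst h <;> simp only [hu] <;>
          rw [div_eq_iff (by linarith : _ - _ ≠ (0:ℝ))] <;> ring
      have hub : Tendsto u (𝓝[Icc p q] c) (𝓝 (u c)) :=
        (hucont.tendsto c).mono_left nhdsWithin_le_nhds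
      rw [huc] at hub
      filter_upwards [hub.eventually_lt_const hb, self_mem_nhdsWithin] with x hx1 hx2
      refine lt_of_le_of_lt ?_ hx1
      rw [hu]
      rw [le_div_iff₀ (by linarith : (0:ℝ) < q - p)]
      have := st5_chord f hconv hbot p q x hp hq (hmem x hx2) hx2.1 hx2.2
      linarith
  intro c hc
  have hcD : f c ≠ ⊤ := st5_Icc f hconv hf0 hbot a c ha hc.1 hc.2
  have : ContinuousWithinAt (fun s => (f s).toReal) (Icc 0 a) c := by
    unfold ContinuousWithinAt
    rw [← Icc_union_Icc_eq_Icc hc.1 hc.2, nhdsWithin_union]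
    exact (claim 0 c c le_rfl hc.1 (by rw [hf0]; simp) hcD (Or.inr rfl)).sup
      (claim c a c (hc.1) hc.2 hcD ha (Or.inl rfl))
  exact this

def st5_E (f : ℝ → EReal) (a : ℝ) : ℝ :=
  a * (f a).toReal - 2 * ∫ s in (0:ℝ)..a, (f s).toReal

lemma st5_lin (A B x c : ℝ) :
    ∫ s in x..c, (A + B * s) = A * (c - x) + B * (c ^ 2 - x ^ 2) / 2 := by
  rw [intervalIntegral.integral_add (f := fun _ => A) (g := fun s => B * s) (_root_.intervalIntegrable_const)
    ((continuous_const.mul continuous_id').intervalIntegrable x c),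
    intervalIntegral.integral_const_mul, integral_id, intervalIntegral.integral_const]
  simp [smul_eq_mul]; ring

lemma st5_intg (f : ℝ → EReal) (hconv : EConvex f) (hlsc : LowerSemicontinuous f)
    (hf0 : f 0 = 0) (hbot : ∀ a, f a ≠ ⊥) :
    ∀ a u v : ℝ, f a ≠ ⊤ → 0 ≤ u → u ≤ v → v ≤ a →
      IntervalIntegrable (fun s => (f s).toReal) volume u v := by
  intro a u v ha h0u huv hva
  have h := (st5_cont f hconv hlsc hf0 hbot a ha).mono (Icc_subset_Icc h0u hva)
  rw [← uIcc_of_le huv] at h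
  exact h.intervalIntegrable

set_option maxHeartbeats 2000000 in
lemma st5_key (f : ℝ → EReal) (hconv : EConvex f) (hlsc : LowerSemicontinuous f)
    (hf0 : f 0 = 0) (hbot : ∀ a, f a ≠ ⊥) :
    ∀ x y t : ℝ, f x ≠ ⊤ → f y ≠ ⊤ → 0 ≤ x → x ≤ y → 0 ≤ t → t ≤ 1 →
      st5_E f (t*x+(1-t)*y) ≤ t * st5_E f x + (1-t) * st5_E f y := by
  intro x y t hx hy h0x hxy ht0 ht1
  rcases eq_or_lt_of_le hxy with rfl | hxy'
  · have hc : t*x+(1-t)*x = x := by ring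
    rw [hc]; nlinarith [le_refl (st5_E f x)]
  rcases eq_or_lt_of_le ht0 with rfl | ht0'
  · have hc : (0:ℝ)*x+(1-0)*y = y := by ring
    rw [hc]; nlinarith [le_refl (st5_E f y)]
  rcases eq_or_lt_of_le ht1 with rfl | ht1'
  · have hc : (1:ℝ)*x+(1-1)*y = x := by ring
    rw [hc]; nlinarith [le_refl (st5_E f x)]
  set c : ℝ := t*x+(1-t)*y with hcdef
  clear_value c
  have hyx : 0 < y - x := by linarith
  have hcx : c - x = (1-t)*(y-x) := by rw [hcdef]; ring
  have hyc : y - c = t*(y-x) := by rw [hcdef]; ring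
  have hxc : x ≤ c := by nlinarith
  have hcy : c ≤ y := by nlinarith
  have h0c : 0 ≤ c := h0x.trans hxc
  have h0y : 0 ≤ y := h0c.trans hcy
  have hfc : f c ≠ ⊤ := st5_Icc f hconv hf0 hbot y c hy h0c hcy
  have hmem : ∀ s ∈ Icc (0:ℝ) y, f s ≠ ⊤ := fun s hs => st5_Icc f hconv hf0 hbot y s hy hs.1 hs.2
  have I1 : IntervalIntegrable (fun s => (f s).toReal) volume 0 x :=
    st5_intg f hconv hlsc hf0 hbot y 0 x hy le_rfl h0x hxy
  have I2 : IntervalIntegrable (fun s => (f s).toReal) volume x c :=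
    st5_intg f hconv hlsc hf0 hbot y x c hy h0x hxc hcy
  have I3 : IntervalIntegrable (fun s => (f s).toReal) volume c y :=
    st5_intg f hconv hlsc hf0 hbot y c y hy h0c hcy le_rfl
  have hsplit1 : (∫ s in (0:ℝ)..x, (f s).toReal) + ∫ s in x..c, (f s).toReal
      = ∫ s in (0:ℝ)..c, (f s).toReal := integral_add_adjacent_intervals I1 I2
  have hsplit2 : (∫ s in (0:ℝ)..c, (f s).toReal) + ∫ s in c..y, (f s).toReal
      = ∫ s in (0:ℝ)..y, (f s).toReal := integral_add_adjacent_intervals (I1.trans I2) I3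
  have hs1 : (y-c) * ((∫ s in (0:ℝ)..x, (f s).toReal) + ∫ s in x..c, (f s).toReal)
      = (y-c) * ∫ s in (0:ℝ)..c, (f s).toReal := by rw [hsplit1]
  have hs2 : (y-c) * ((∫ s in (0:ℝ)..c, (f s).toReal) + ∫ s in c..y, (f s).toReal)
      = (y-c) * ∫ s in (0:ℝ)..y, (f s).toReal := by rw [hsplit2]
  have hpt1 : ∀ s ∈ Icc x c,
      ((y-c) * (f c).toReal - ((f y).toReal - (f c).toReal) * c)
        + ((f y).toReal - (f c).toReal) * s ≤ (y-c) * (f s).toReal := by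
    intro s hs
    have hsD : f s ≠ ⊤ := hmem s ⟨h0x.trans hs.1, hs.2.trans hcy⟩
    have := st5_chord f hconv hbot s y c hsD hy hfc hs.2 hcy
    nlinarith [this]
  have hpt2 : ∀ s ∈ Icc c y, (y-c) * (f s).toReal ≤
      (y * (f c).toReal - c * (f y).toReal) + ((f y).toReal - (f c).toReal) * s := by
    intro s hs
    have hsD : f s ≠ ⊤ := hmem s ⟨h0c.trans hs.1, hs.2⟩
    have := st5_chord f hconv hbot c y s hfc hy hsD hs.1 hs.2
    nlinarith [this]
  have hint1 : ∫ s in x..c, (((y-c) * (f c).toReal - ((f y).toReal - (f c).toReal) * c)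
        + ((f y).toReal - (f c).toReal) * s) ≤ ∫ s in x..c, (y-c) * (f s).toReal :=
    intervalIntegral.integral_mono_on hxc
      ((_root_.intervalIntegrable_const).add
        ((continuous_const.mul continuous_id').intervalIntegrable x c))
      (I2.const_mul _) hpt1
  have hint2 : ∫ s in c..y, (y-c) * (f s).toReal ≤
      ∫ s in c..y, ((y * (f c).toReal - c * (f y).toReal)
        + ((f y).toReal - (f c).toReal) * s) :=
    intervalIntegral.integral_mono_on hcy (I3.const_mul _)
      ((_root_.intervalIntegrable_const).add
        ((continuous_const.mul continuous_id').intervalIntegrable c y)) hpt2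
  rw [st5_lin, intervalIntegral.integral_const_mul] at hint1
  rw [st5_lin, intervalIntegral.integral_const_mul] at hint2
  have hpx : ((y-c) * (f c).toReal - ((f y).toReal - (f c).toReal) * c)
      + ((f y).toReal - (f c).toReal) * x ≤ (y-c) * (f x).toReal := hpt1 x ⟨le_rfl, hxc⟩
  have hpxm : x * (((y-c) * (f c).toReal - ((f y).toReal - (f c).toReal) * c)
      + ((f y).toReal - (f c).toReal) * x) ≤ x * ((y-c) * (f x).toReal) :=
    mul_le_mul_of_nonneg_left hpx h0x
  have claim1 : (y-c) * (st5_E f c - st5_E f x) ≤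
      (c-x) * (c * (f y).toReal - y * (f c).toReal) := by
    simp only [st5_E]
    linarith [hint1, hpxm, hs1]
  have claim2 : (y-c) * (c * (f y).toReal - y * (f c).toReal) ≤
      (y-c) * (st5_E f y - st5_E f c) := by
    simp only [st5_E]
    linarith [hint2, hs2]
  have htyx : 0 < t * (y - x) := by positivity
  rw [hyc] at claim2
  have hq : c * (f y).toReal - y * (f c).toReal ≤ st5_E f y - st5_E f c :=
    le_of_mul_le_mul_left (by linarith) htyx
  rw [hyc, hcx] at claim1
  have h2 : t * (y-x) * (st5_E f c - st5_E f x) ≤ (1-t) * (y-x) * (st5_E f y - st5_E f c) := by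
    calc t * (y-x) * (st5_E f c - st5_E f x)
        ≤ (1-t)*(y-x) * (c * (f y).toReal - y * (f c).toReal) := claim1
      _ ≤ (1-t)*(y-x) * (st5_E f y - st5_E f c) :=
          mul_le_mul_of_nonneg_left hq (by nlinarith)
  have h3 : t * (st5_E f c - st5_E f x) ≤ (1-t) * (st5_E f y - st5_E f c) := by
    have h4 : t * (st5_E f c - st5_E f x) * (y-x) ≤ (1-t) * (st5_E f y - st5_E f c) * (y-x) := by
      nlinarith [h2]
    have := le_of_mul_le_mul_right h4 hyx
    linarith
  linarith

-- toReal of f at 0 is 0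
lemma st5_G0 (f : ℝ → EReal) (hf0 : f 0 = 0) : (f 0).toReal = 0 := by rw [hf0]; simp

-- core monotonicity estimate: E x ≥ d * G x - (x-d) * G d - 2 * ∫₀^d G  for d ≤ x in dom
lemma st5_lower (f : ℝ → EReal) (hconv : EConvex f) (hlsc : LowerSemicontinuous f)
    (hf0 : f 0 = 0) (hbot : ∀ a, f a ≠ ⊥) :
    ∀ d x : ℝ, f x ≠ ⊤ → 0 ≤ d → d ≤ x → f d ≠ ⊤ →
      d * (f x).toReal - (x - d) * (f d).toReal - 2 * (∫ s in (0:ℝ)..d, (f s).toReal)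
        ≤ st5_E f x := by
  intro d x hx h0d hdx hd
  have h0x : 0 ≤ d := h0d
  rcases eq_or_lt_of_le hdx with rfl | hdx'
  · simp only [st5_E]; ring_nf; exact le_refl _
  have hmem : ∀ s ∈ Icc d x, f s ≠ ⊤ :=
    fun s hs => st5_Icc f hconv hf0 hbot x s hx (h0d.trans hs.1) hs.2
  have I1 : IntervalIntegrable (fun s => (f s).toReal) volume 0 d :=
    st5_intg f hconv hlsc hf0 hbot x 0 d hx le_rfl h0d hdx
  have I2 : IntervalIntegrable (fun s => (f s).toReal) volume d x :=
    st5_intg f hconv hlsc hf0 hbot x d x hx h0d hdx le_rfl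
  have hsplit : (∫ s in (0:ℝ)..d, (f s).toReal) + ∫ s in d..x, (f s).toReal
      = ∫ s in (0:ℝ)..x, (f s).toReal := integral_add_adjacent_intervals I1 I2
  have hpt : ∀ s ∈ Icc d x, (x - d) * (f s).toReal ≤
      (x * (f d).toReal - d * (f x).toReal) + ((f x).toReal - (f d).toReal) * s := by
    intro s hs
    have := st5_chord f hconv hbot d x s hd hx (hmem s hs) hs.1 hs.2
    nlinarith [this]
  have hint : ∫ s in d..x, (x - d) * (f s).toReal ≤
      ∫ s in d..x, ((x * (f d).toReal - d * (f x).toReal) + ((f x).toReal - (f d).toReal) * s) :=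
    intervalIntegral.integral_mono_on hdx (I2.const_mul _)
      ((_root_.intervalIntegrable_const).add
        ((continuous_const.mul continuous_id').intervalIntegrable d x)) hpt
  rw [st5_lin, intervalIntegral.integral_const_mul] at hint
  have goal1 : (x - d) * (d * (f x).toReal - (x - d) * (f d).toReal
      - 2 * (∫ s in (0:ℝ)..d, (f s).toReal)) ≤ (x - d) * st5_E f x := by
    simp only [st5_E]
    have hs1 : (x-d) * ((∫ s in (0:ℝ)..d, (f s).toReal) + ∫ s in d..x, (f s).toReal)
        = (x-d) * ∫ s in (0:ℝ)..x, (f s).toReal := by rw [hsplit]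
    nlinarith [hint, hs1]
  exact le_of_mul_le_mul_left goal1 (by linarith : (0:ℝ) < x - d)

lemma st5_mono (f : ℝ → EReal) (hconv : EConvex f) (hlsc : LowerSemicontinuous f)
    (hf0 : f 0 = 0) (hbot : ∀ a, f a ≠ ⊥) :
    ∀ a b : ℝ, f b ≠ ⊤ → 0 ≤ a → a ≤ b → st5_E f a ≤ st5_E f b := by
  intro a b hb h0a hab
  have ha : f a ≠ ⊤ := st5_Icc f hconv hf0 hbot b a hb h0a hab
  have h0b : 0 ≤ b := h0a.trans hab
  have hlow := st5_lower f hconv hlsc hf0 hbot a b hb h0a hab ha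
  -- b * G a ≤ a * G b  via chord at a on [0,b]
  have hch : b * (f a).toReal ≤ a * (f b).toReal := by
    have hf0' : f 0 ≠ ⊤ := by rw [hf0]; simp
    have := st5_chord f hconv hbot 0 b a hf0' hb ha h0a hab
    rw [st5_G0 f hf0] at this
    nlinarith [this]
  have hEa : st5_E f a = a * (f a).toReal - 2 * ∫ s in (0:ℝ)..a, (f s).toReal := rfl
  rw [hEa]
  linarith [hlow, hch]

lemma st5_eDen_of_ne (f : ℝ → EReal) {a : ℝ} (h : f a ≠ ⊤) :
    eDen f a = ((st5_E f a : ℝ) : EReal) := by rw [eDen, if_neg h]; rfl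

lemma st5_eDen_ne_bot (f : ℝ → EReal) (a : ℝ) : eDen f a ≠ ⊥ := by
  by_cases h : f a = ⊤
  · rw [eDen, if_pos h]; simp
  · rw [st5_eDen_of_ne f h]; exact EReal.coe_ne_bot _


lemma st5_Econt (f : ℝ → EReal) (hconv : EConvex f) (hlsc : LowerSemicontinuous f)
    (hf0 : f 0 = 0) (hbot : ∀ a, f a ≠ ⊥) :
    ∀ a, f a ≠ ⊤ → 0 ≤ a → ContinuousOn (st5_E f) (Icc 0 a) := by
  intro a ha h0a
  have hg := st5_cont f hconv hlsc hf0 hbot a ha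
  have hgint : IntegrableOn (fun s => (f s).toReal) (uIcc 0 a) volume := by
    rw [uIcc_of_le h0a]
    exact hg.integrableOn_Icc
  have hprim : ContinuousOn (fun x => ∫ s in (0:ℝ)..x, (f s).toReal) (Icc 0 a) := by
    have := continuousOn_primitive_interval (f := fun s => (f s).toReal) (a := 0) (b := a)
      (μ := volume) hgint
    rwa [uIcc_of_le h0a] at this
  exact (continuousOn_id.mul hg).sub (continuousOn_const.mul hprim)

lemma st5_lsc (f : ℝ → EReal) (hconv : EConvex f) (hlsc : LowerSemicontinuous f)
    (hf0 : f 0 = 0) (hneg : ∀ a : ℝ, a < 0 → f a = ⊤)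
    (hbot : ∀ a, f a ≠ ⊥)
    (hdom : (interior {a : ℝ | f a ≠ ⊤}).Nonempty) :
    LowerSemicontinuous (eDen f) := by
  have hnn : ∀ x : ℝ, f x ≠ ⊤ → 0 ≤ x := by
    intro x hx; by_contra h; exact hx (hneg x (lt_of_not_ge h))
  intro c
  by_cases hc : f c = ⊤
  · -- c not in domain
    rcases lt_or_ge c 0 with hc0 | hc0
    · intro y hy
      filter_upwards [Iio_mem_nhds hc0] with x hx
      rw [eDen, if_pos (hneg x hx)]
      exact hy.trans_le le_top
    · have hcpos : 0 < c := by
        rcases eq_or_lt_of_le hc0 with rfl | h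
        · rw [hf0] at hc; exact absurd hc (by simp)
        · exact h
      have hDlt : ∀ x : ℝ, f x ≠ ⊤ → x < c := by
        intro x hx
        by_contra h
        exact (st5_Icc f hconv hf0 hbot x c hx hc0 (le_of_not_gt h)) hc
      -- pick d ∈ dom with d > 0
      obtain ⟨z, hz⟩ := hdom
      have hzD : f z ≠ ⊤ := interior_subset hz
      obtain ⟨ε, hε, hball⟩ := Metric.mem_nhds_iff.1 (mem_interior_iff_mem_nhds.1 hz)
      set d : ℝ := z + ε / 2 with hd
      have hdD : f d ≠ ⊤ := hball (by
        rw [Metric.mem_ball, Real.dist_eq, hd, show z + ε/2 - z = ε/2 by ring,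
          abs_of_pos (by linarith)]
        linarith)
      have hdpos : 0 < d := by have := hnn z hzD; rw [hd]; linarith
      have hdc : d < c := hDlt d hdD
      set K : ℝ := (c - d) * |(f d).toReal| + 2 * ∫ s in (0:ℝ)..d, (f s).toReal with hK
      have hEbound : ∀ x : ℝ, f x ≠ ⊤ → d ≤ x → d * (f x).toReal - K ≤ st5_E f x := by
        intro x hx hdxx
        have hxc := hDlt x hx
        have h1 := st5_lower f hconv hlsc hf0 hbot d x hx hdpos.le hdxx hdD
        have h2 : (x - d) * (f d).toReal ≤ (c - d) * |(f d).toReal| := by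
          rcases le_or_gt 0 ((f d).toReal) with h | h
          · calc (x - d) * (f d).toReal ≤ (c - d) * (f d).toReal := by nlinarith
              _ ≤ (c - d) * |(f d).toReal| := by
                  apply mul_le_mul_of_nonneg_left (le_abs_self _) (by linarith)
          · calc (x - d) * (f d).toReal ≤ 0 := by nlinarith
              _ ≤ (c - d) * |(f d).toReal| := mul_nonneg (by linarith) (abs_nonneg _)
        rw [hK]; linarith
      intro y hy
      obtain ⟨r, hyr, hrtop⟩ := EReal.lt_iff_exists_real_btwn.1 hy
      have hftarget : (((r + K) / d : ℝ) : EReal) < f c := by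
        rw [hc]; exact EReal.coe_lt_top _
      filter_upwards [hlsc c _ hftarget, Ioi_mem_nhds hdc] with x hx1 hx2
      by_cases hx : f x = ⊤
      · rw [eDen, if_pos hx]; exact hyr.trans_le le_top
      · rw [st5_eDen_of_ne f hx]
        refine hyr.trans ?_
        rw [EReal.coe_lt_coe_iff]
        have h3 : (r + K) / d < (f x).toReal := by
          have := hx1
          rw [← EReal.coe_toReal hx (hbot x)] at this
          exact EReal.coe_lt_coe_iff.1 this
        have h4 : r + K < d * (f x).toReal := by
          rw [div_lt_iff₀ hdpos] at h3; linarith [h3]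
        have := hEbound x hx (le_of_lt hx2)
        linarith
  · -- c in domain
    have h0c : 0 ≤ c := hnn c hc
    have key : ∃ a : ℝ, f a ≠ ⊤ ∧ c ≤ a ∧ ∀ᶠ x in 𝓝 c, f x ≠ ⊤ → x ∈ Icc 0 a := by
      by_cases hex : ∃ a : ℝ, f a ≠ ⊤ ∧ c < a
      · obtain ⟨a, haD, hca⟩ := hex
        refine ⟨a, haD, hca.le, ?_⟩
        filter_upwards [Iio_mem_nhds hca] with x hx hxD
        exact ⟨hnn x hxD, le_of_lt hx⟩
      · refine ⟨c, hc, le_rfl, Eventually.of_forall fun x hxD => ⟨hnn x hxD, ?_⟩⟩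
        by_contra h
        exact hex ⟨x, hxD, lt_of_not_ge h⟩
    obtain ⟨a, haD, hca, hev⟩ := key
    have h0a : 0 ≤ a := h0c.trans hca
    have hcw : ContinuousWithinAt (st5_E f) (Icc 0 a) c :=
      st5_Econt f hconv hlsc hf0 hbot a haD h0a c ⟨h0c, hca⟩
    intro y hy
    rw [st5_eDen_of_ne f hc] at hy
    obtain ⟨r, hyr, hrE⟩ := EReal.lt_iff_exists_real_btwn.1 hy
    have hrE' : r < st5_E f c := EReal.coe_lt_coe_iff.1 hrE
    have hevE : ∀ᶠ x in 𝓝[Icc 0 a] c, r < st5_E f x := hcw.eventually_const_lt hrE'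
    rw [eventually_nhdsWithin_iff] at hevE
    filter_upwards [hevE, hev] with x h1 h2
    by_cases hx : f x = ⊤
    · rw [eDen, if_pos hx]; exact hyr.trans_le le_top
    · rw [st5_eDen_of_ne f hx]
      exact hyr.trans (by exact_mod_cast h1 (h2 hx))

/-- The `H^{-1}` energy density `e` is convex and lower semicontinuous with
`e(0) = 0`, `e = +∞` on `(−∞, 0)`, `int(dom e) ≠ ∅`, and `e` is non-decreasing
on `[0, ∞)`. -/
theorem statement5 (f : ℝ → EReal) (hconv : EConvex f)
    (hlsc : LowerSemicontinuous f) (hf0 : f 0 = 0)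
    (hneg : ∀ a : ℝ, a < 0 → f a = ⊤)
    (hdom : (interior {a : ℝ | f a ≠ ⊤}).Nonempty) :
    EConvex (eDen f) ∧
    LowerSemicontinuous (eDen f) ∧
    eDen f 0 = 0 ∧
    (∀ a : ℝ, a < 0 → eDen f a = ⊤) ∧
    (interior {a : ℝ | eDen f a ≠ ⊤}).Nonempty ∧
    (∀ a b : ℝ, 0 ≤ a → a ≤ b → eDen f a ≤ eDen f b) := by
  have hbot : ∀ a, f a ≠ ⊥ := st5_bot f hconv hlsc hf0 hneg
  have hnn : ∀ x : ℝ, f x ≠ ⊤ → 0 ≤ x := by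
    intro x hx; by_contra h; exact hx (hneg x (lt_of_not_ge h))
  have hf0' : f 0 ≠ ⊤ := by rw [hf0]; simp
  refine ⟨?_, st5_lsc f hconv hlsc hf0 hneg hbot hdom, ?_, ?_, ?_, ?_⟩
  · -- EConvex
    intro x y t ht0 ht1
    rcases eq_or_lt_of_le ht0 with rfl | ht0'
    · have h1 : (0:ℝ)*x + (1-0)*y = y := by ring
      rw [h1]
      norm_num
    rcases eq_or_lt_of_le ht1 with rfl | ht1'
    · have h1 : (1:ℝ)*x + (1-1)*y = x := by ring
      rw [h1]
      norm_num
    by_cases hx : f x = ⊤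
    · have hne : ((1-t:ℝ):EReal) * eDen f y ≠ ⊥ := by
        by_cases hy' : f y = ⊤
        · rw [eDen, if_pos hy', EReal.coe_mul_top_of_pos (by linarith)]; simp
        · rw [st5_eDen_of_ne f hy', ← EReal.coe_mul]; exact EReal.coe_ne_bot _
      rw [show eDen f x = ⊤ by rw [eDen, if_pos hx], EReal.coe_mul_top_of_pos ht0',
        EReal.top_add_of_ne_bot hne]
      exact le_top
    by_cases hy : f y = ⊤
    · have hne : (t:EReal) * eDen f x ≠ ⊥ := by
        rw [st5_eDen_of_ne f hx, ← EReal.coe_mul]; exact EReal.coe_ne_bot _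
      rw [show eDen f y = ⊤ by rw [eDen, if_pos hy], EReal.coe_mul_top_of_pos (by linarith),
        EReal.add_top_of_ne_bot hne]
      exact le_top
    · have hfc : f (t*x + (1-t)*y) ≠ ⊤ := by
        have h := hconv x y t ht0 ht1
        rw [← EReal.coe_toReal hx (hbot x), ← EReal.coe_toReal hy (hbot y),
          ← EReal.coe_mul, ← EReal.coe_mul, ← EReal.coe_add] at h
        exact ne_top_of_le_ne_top (EReal.coe_ne_top _) h
      rw [st5_eDen_of_ne f hfc, st5_eDen_of_ne f hx, st5_eDen_of_ne f hy,
        ← EReal.coe_mul, ← EReal.coe_mul, ← EReal.coe_add, EReal.coe_le_coe_iff]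
      rcases le_total x y with hxy | hyx
      · exact st5_key f hconv hlsc hf0 hbot x y t hx hy (hnn x hx) hxy ht0 ht1
      · have h := st5_key f hconv hlsc hf0 hbot y x (1-t) hy hx (hnn y hy) hyx
          (by linarith) (by linarith)
        have e1 : (1-t)*y + (1-(1-t))*x = t*x + (1-t)*y := by ring
        rw [e1] at h
        linarith
  · -- e 0 = 0
    rw [st5_eDen_of_ne f hf0']
    have h : st5_E f 0 = 0 := by simp [st5_E]
    rw [h]; rfl
  · intro a ha; rw [eDen, if_pos (hneg a ha)]
  · have hset : {a : ℝ | eDen f a ≠ ⊤} = {a : ℝ | f a ≠ ⊤} := by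
      ext a
      by_cases h : f a = ⊤
      · simp [eDen, h]
      · simp [st5_eDen_of_ne f h, h]
    rw [hset]; exact hdom
  · intro a b h0a hab
    by_cases hb : f b = ⊤
    · rw [show eDen f b = ⊤ by rw [eDen, if_pos hb]]; exact le_top
    · have ha : f a ≠ ⊤ := st5_Icc f hconv hf0 hbot b a hb h0a hab
      rw [st5_eDen_of_ne f ha, st5_eDen_of_ne f hb, EReal.coe_le_coe_iff]
      exact st5_mono f hconv hlsc hf0 hbot a b hb h0a hab
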